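/- Let E = F ∪ {0} ⊆ 𝕋 with F finite and 0 ∉ F. Suppose for quasi all f ∈ C(𝕋) the set {sₙf|_F : n ∈ ℕ} is dense in ℂ^F, and the single-point universality at 0 holds along every infinite Λ ⊆ ℕ (i.e., for any g ∈ C(𝕋), c ∈ ℂ, ε > 0, infinite Λ, there exist f with ‖f−g‖ < ε and n ∈ Λ with |sₙf(0) − c| < ε). Then for all g ∈ C(𝕋), ε > 0 and h : E → ℂ there exist f ∈ C(𝕋) and n ∈ ℕ with ‖f − g‖ < ε and max_{t∈E}|sₙf(t) − h(t)| < ε. -/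

import Mathlib

open MeasureTheory Complex Filter Topology Set TopologicalSpace

noncomputable section

instance : Fact (0 < 2 * Real.pi) := ⟨by positivity⟩

/-- The unit circle ℝ/2πℤ. -/
abbrev UnitCircle := AddCircle (2 * Real.pi)

/-- The n-th partial sum of the Fourier series of `f`. -/
noncomputable def partialSum (n : ℕ) (f : UnitCircle → ℂ) : C(UnitCircle, ℂ) :=
  ∑ k ∈ Finset.Icc (-(n : ℤ)) (n : ℤ), fourierCoeff f k • fourier k

lemma fourier_zpow (k : ℤ) (y : UnitCircle) : (fourier k y : ℂ) = (fourier 1 y : ℂ) ^ k := by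
  have hz : (fourier 1 y : ℂ) ≠ 0 := by
    rw [fourier_one]; exact Circle.coe_ne_zero _
  have hconj : (fourier (-1 : ℤ) y : ℂ) = ((fourier 1 y : ℂ))⁻¹ := by
    rw [fourier_neg]
    rw [Complex.inv_def]
    rw [fourier_one]
    simp [Complex.normSq_eq_norm_sq, Circle.norm_coe]
  induction k using Int.induction_on with
  | zero => simp [fourier_zero]
  | succ i ih => rw [fourier_add, ih, zpow_add₀ hz, zpow_one]
  | pred i ih =>
      have h1 : (-(i:ℤ) - 1) = (-(i:ℤ)) + (-1) := by ring
      rw [h1, fourier_add, ih, zpow_add₀ hz, hconj, zpow_neg_one]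

lemma norm_fourier_one (y : UnitCircle) : ‖(fourier 1 y : ℂ)‖ = 1 := by
  rw [fourier_one]; exact Circle.norm_coe _

lemma dirichlet_bound (n : ℕ) (y : UnitCircle) (hy : (fourier 1 y : ℂ) ≠ 1) :
    ‖∑ k ∈ Finset.Icc (-(n : ℤ)) (n : ℤ), (fourier k y : ℂ)‖
      ≤ 2 / ‖(fourier 1 y : ℂ) - 1‖ := by
  set z : ℂ := (fourier 1 y : ℂ) with hzdef
  have hz : z ≠ 0 := by rw [hzdef, fourier_one]; exact Circle.coe_ne_zero _
  have hnz : ‖z‖ = 1 := norm_fourier_one y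
  have hre : ∑ k ∈ Finset.Icc (-(n : ℤ)) (n : ℤ), (fourier k y : ℂ)
      = z ^ (-(n:ℤ)) * ∑ j ∈ Finset.range (2 * n + 1), z ^ j := by
    rw [Finset.mul_sum]
    rw [Finset.sum_nbij' (i := fun (k : ℤ) => (k + n).toNat) (j := fun (j : ℕ) => (j : ℤ) - n)]
    · intro k hk
      simp only [Finset.mem_Icc] at hk
      simp only [Finset.mem_range]
      omega
    · intro j hj
      simp only [Finset.mem_range] at hj
      simp only [Finset.mem_Icc]
      omega
    · intro k hk; simp only [Finset.mem_Icc] at hk; omega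
    · intro j hj; simp only [Finset.mem_range] at hj; omega
    · intro k hk
      simp only [Finset.mem_Icc] at hk
      rw [fourier_zpow, ← zpow_natCast, ← zpow_add₀ hz]
      congr 1
      omega
  rw [hre]
  rw [geom_sum_eq hy]
  rw [norm_mul, norm_zpow, hnz, one_zpow, one_mul, norm_div]
  have h2 : ‖z ^ (2 * n + 1) - 1‖ ≤ 2 := by
    calc ‖z ^ (2 * n + 1) - 1‖ ≤ ‖z ^ (2 * n + 1)‖ + ‖(1 : ℂ)‖ := norm_sub_le _ _
    _ = 2 := by rw [norm_pow, hnz]; norm_num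
  gcongr

lemma fourier_arg_sub (k : ℤ) (t x : UnitCircle) :
    (fourier k (t - x) : ℂ) = fourier k t * fourier (-k) x := by
  have : (fourier k (t - x) : ℂ) = fourier k (t + (-x)) := by rw [sub_eq_add_neg]
  rw [this]
  rw [fourier_apply, fourier_apply, fourier_apply, smul_add, AddCircle.toCircle_add,
    Circle.coe_mul]
  congr 2
  rw [smul_neg, neg_smul]

lemma integrable_aux {w : UnitCircle → ℂ} (hw : Continuous w) :
    Integrable w (AddCircle.haarAddCircle) := by
  apply hw.integrable_of_hasCompactSupport
  exact (isClosed_tsupport _).isCompact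

lemma partialSum_eq_integral (n : ℕ) (w : C(UnitCircle, ℂ)) (t : UnitCircle) :
    partialSum n ⇑w t = ∫ x, (∑ k ∈ Finset.Icc (-(n : ℤ)) (n : ℤ), (fourier k (t - x) : ℂ)) * w x
      ∂AddCircle.haarAddCircle := by
  have h1 : partialSum n ⇑w t
      = ∑ k ∈ Finset.Icc (-(n : ℤ)) (n : ℤ), fourierCoeff (⇑w) k * fourier k t := by
    rw [partialSum, ContinuousMap.coe_sum, Finset.sum_apply]
    simp [smul_eq_mul]
  rw [h1]
  have h2 : ∀ k ∈ Finset.Icc (-(n : ℤ)) (n : ℤ), fourierCoeff (⇑w) k * fourier k t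
      = ∫ x, (fourier k (t - x) : ℂ) * w x ∂AddCircle.haarAddCircle := by
    intro k _
    rw [fourierCoeff, mul_comm, ← integral_const_mul]
    congr 1 with x
    rw [fourier_arg_sub, smul_eq_mul]
    ring
  rw [Finset.sum_congr rfl h2, ← integral_finset_sum]
  · congr 1 with x
    rw [Finset.sum_mul]
  · intro k _
    apply integrable_aux
    exact ((fourier k).continuous.comp (continuous_const.sub continuous_id)).mul w.continuous

lemma partialSum_add (n : ℕ) (a b : C(UnitCircle, ℂ)) (t : UnitCircle) :
    partialSum n ⇑(a + b) t = partialSum n ⇑a t + partialSum n ⇑b t := by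
  rw [partialSum_eq_integral, partialSum_eq_integral, partialSum_eq_integral, ← integral_add]
  · congr 1 with x
    simp only [ContinuousMap.add_apply]
    ring
  all_goals
    apply integrable_aux
    exact (continuous_finset_sum _ fun k _ =>
      (fourier k).continuous.comp (continuous_const.sub continuous_id)).mul (by continuity)

lemma loc_bound (δ : ℝ) (hδ : 0 < δ) :
    ∃ C : ℝ, 0 ≤ C ∧ ∀ (w : C(UnitCircle, ℂ)) (t : UnitCircle) (n : ℕ),
      (∀ x, dist x t < δ → w x = 0) → ‖partialSum n ⇑w t‖ ≤ C * ‖w‖ := by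
  set K : Set UnitCircle := {y | δ ≤ dist y 0} with hK
  have hKclosed : IsClosed K := isClosed_le continuous_const (continuous_id.dist continuous_const)
  obtain ⟨c, hc, hcK⟩ : ∃ c : ℝ, 0 < c ∧ ∀ y ∈ K, c ≤ ‖(fourier 1 y : ℂ) - 1‖ := by
    rcases K.eq_empty_or_nonempty with hKe | hKne
    · exact ⟨1, one_pos, by simp [hKe]⟩
    · have hcont : Continuous fun y : UnitCircle => ‖(fourier 1 y : ℂ) - 1‖ :=
        ((fourier 1).continuous.sub continuous_const).norm
      obtain ⟨y₀, hy₀K, hy₀min⟩ :=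
        hKclosed.isCompact.exists_isMinOn hKne hcont.continuousOn
      refine ⟨‖(fourier 1 y₀ : ℂ) - 1‖, ?_, fun y hy => hy₀min hy⟩
      rw [norm_pos_iff, sub_ne_zero]
      intro heq
      have h0 : (fourier 1 y₀ : ℂ) = (fourier 1 (0 : UnitCircle) : ℂ) := by
        rw [heq, fourier_eval_zero]
      rw [fourier_one, fourier_one] at h0
      have := AddCircle.injective_toCircle (by positivity : (2 * Real.pi) ≠ 0)
        (Subtype.coe_injective h0)
      rw [this] at hy₀K
      simp only [hK, Set.mem_setOf_eq, dist_self] at hy₀K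
      linarith
  refine ⟨2 / c, by positivity, fun w t n hw => ?_⟩
  rw [partialSum_eq_integral]
  have := norm_integral_le_of_norm_le_const (μ := AddCircle.haarAddCircle)
    (C := 2 / c * ‖w‖)
    (f := fun x => (∑ k ∈ Finset.Icc (-(n : ℤ)) (n : ℤ), (fourier k (t - x) : ℂ)) * w x) ?_
  · simpa using this
  · filter_upwards with x
    by_cases hwx : w x = 0
    · rw [hwx, mul_zero, norm_zero]
      positivity
    · have hdist : δ ≤ dist x t := le_of_not_gt fun hlt => hwx (hw x hlt)
      have hmem : (t - x) ∈ K := by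
        simp only [hK, Set.mem_setOf_eq, dist_zero_right]
        rwa [show ‖t - x‖ = dist x t by rw [dist_eq_norm, ← norm_neg]; congr 1; abel]
      have hne1 : (fourier 1 (t - x) : ℂ) ≠ 1 := by
        intro heq
        have := hcK _ hmem
        rw [heq, sub_self, norm_zero] at this
        linarith
      rw [norm_mul]
      have h1 := dirichlet_bound n (t - x) hne1
      have h2 : 2 / ‖(fourier 1 (t - x) : ℂ) - 1‖ ≤ 2 / c :=
        div_le_div_of_nonneg_left (by norm_num) hc (hcK _ hmem)
      exact mul_le_mul (h1.trans h2) (w.norm_coe_le_norm x) (norm_nonneg _) (by positivity)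

set_option maxHeartbeats 1000000 in
set_option synthInstance.maxHeartbeats 400000 in
/-- Induction step: given universality on the finite set `F` for quasi all `f`, and
single-point universality at `0` along every infinite `Λ`, one gets the joint approximation
on `E = F ∪ {0}`. -/
theorem stmt19 (F : Set UnitCircle) (hF : F.Finite) (h0F : (0 : UnitCircle) ∉ F)
    (hFuniv : {f : C(UnitCircle, ℂ) |
        Dense (Set.range fun n => fun t : F => partialSum n ⇑f t)} ∈
      residual C(UnitCircle, ℂ))
    (h0univ : ∀ Λ : Set ℕ, Λ.Infinite → ∀ g : C(UnitCircle, ℂ), ∀ c : ℂ, ∀ ε : ℝ, 0 < ε →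
      ∃ f : C(UnitCircle, ℂ), ∃ n ∈ Λ, ‖f - g‖ < ε ∧ ‖partialSum n ⇑f 0 - c‖ < ε) :
    ∀ g : C(UnitCircle, ℂ), ∀ ε : ℝ, 0 < ε →
      ∀ h : (F ∪ {0} : Set UnitCircle) → ℂ,
        ∃ f : C(UnitCircle, ℂ), ∃ n : ℕ, ‖f - g‖ < ε ∧
          ∀ t : (F ∪ {0} : Set UnitCircle), ‖partialSum n ⇑f t - h t‖ < ε := by
  intro g ε hε h
  rcases Set.eq_empty_or_nonempty F with hFe | hFne
  · -- F empty
    obtain ⟨f, n, _, hfg, h0⟩ :=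
      h0univ Set.univ Set.infinite_univ g (h ⟨0, Or.inr rfl⟩) ε hε
    refine ⟨f, n, hfg, ?_⟩
    rintro ⟨t, htF | ht0⟩
    · exact absurd (hFe ▸ htF) (Set.notMem_empty t)
    · have ht : t = 0 := ht0
      subst ht
      convert h0 using 3
  · -- F nonempty
    obtain ⟨t₀, ht₀⟩ := hFne
    haveI : Finite ↥F := hF.to_subtype
    have hFclosed : IsClosed F := hF.isClosed
    set d : ℝ := Metric.infDist (0 : UnitCircle) F with hd
    have hd0 : 0 < d := (hFclosed.notMem_iff_infDist_pos ⟨t₀, ht₀⟩).mp h0F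
    set φ : UnitCircle → ℝ := fun x => max 0 (min 1 (2 - 3 * Metric.infDist x F / d)) with hφ
    have hφc : Continuous φ :=
      continuous_const.max (continuous_const.min (continuous_const.sub
        ((continuous_const.mul (Metric.continuous_infDist_pt F)).div_const d)))
    have hφ0le : ∀ x, 0 ≤ φ x := fun x => le_max_left _ _
    have hφle1 : ∀ x, φ x ≤ 1 := fun x => max_le (by norm_num) (min_le_left _ _)
    have hφF : ∀ x, Metric.infDist x F < d / 3 → φ x = 1 := by
      intro x hx
      have hnn : 0 ≤ Metric.infDist x F := Metric.infDist_nonneg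
      have h1 : (1 : ℝ) ≤ 2 - 3 * Metric.infDist x F / d := by
        have : 3 * Metric.infDist x F / d ≤ 1 := by
          rw [div_le_one hd0]; linarith
        linarith
      rw [hφ]
      simp only [min_eq_left h1]
      exact max_eq_right (by norm_num)
    have hφ0 : ∀ x, dist x 0 < d / 3 → φ x = 0 := by
      intro x hx
      have hge : 2 * d / 3 ≤ Metric.infDist x F := by
        have h1 : Metric.infDist (0 : UnitCircle) F ≤ Metric.infDist x F + dist 0 x :=
          Metric.infDist_le_infDist_add_dist
        rw [dist_comm] at h1
        linarith
      have h2 : 2 - 3 * Metric.infDist x F / d ≤ 0 := by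
        have : 2 ≤ 3 * Metric.infDist x F / d := by
          rw [le_div_iff₀ hd0]; linarith
        linarith
      rw [hφ]
      exact max_eq_left ((min_le_right _ _).trans h2)
    obtain ⟨C, hC0, hCloc⟩ := loc_bound (d / 3) (by positivity)
    have hdense : Dense {f : C(UnitCircle, ℂ) |
        Dense (Set.range fun n => fun t : F => partialSum n ⇑f t)} :=
      dense_of_mem_residual hFuniv
    obtain ⟨u, hu_mem, hu_close⟩ := hdense.exists_dist_lt g (by positivity : (0:ℝ) < ε / 2)
    have hu_close' : ‖u - g‖ < ε / 2 := by rwa [dist_comm, dist_eq_norm] at hu_close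
    set v : ℕ → (↥F → ℂ) := fun n => fun t : F => partialSum n ⇑u t with hv
    have hu_dense : Dense (Set.range v) := hu_mem
    set hb : ↥F → ℂ := fun t => h ⟨t.1, Or.inl t.2⟩ with hhb
    set Λ : Set ℕ := {n | ∀ t : ↥F, ‖v n t - hb t‖ < ε / 2} with hΛdef
    have hΛinf : Λ.Infinite := by
      apply Set.infinite_of_forall_exists_gt
      intro m
      set B : Set (↥F → ℂ) := {x | ∀ t, ‖x t - hb t‖ < ε / 2} with hB
      have hBopen : IsOpen B := by
        have hBeq : B = ⋂ t : ↥F, (fun x : ↥F → ℂ => x t) ⁻¹' Metric.ball (hb t) (ε / 2) := by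
          ext x
          simp [hB, Metric.mem_ball, dist_eq_norm]
        rw [hBeq]
        exact isOpen_iInter_of_finite fun t => (Metric.isOpen_ball).preimage (continuous_apply t)
      set S : ℕ → (↥F → ℂ) := fun j => fun t => hb t + ((ε / (4 * (j + 1)) : ℝ) : ℂ) with hS
      have hSinj : Function.Injective S := by
        intro j k hjk
        have h1 := congrFun hjk ⟨t₀, ht₀⟩
        simp only [hS] at h1
        have h2 : ((ε / (4 * ((j:ℝ) + 1)) : ℝ) : ℂ) = ((ε / (4 * ((k:ℝ) + 1)) : ℝ) : ℂ) := by
          push_cast at h1 ⊢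
          exact add_left_cancel h1
        rw [Complex.ofReal_inj] at h2
        have h3 : (4 * ((j:ℝ) + 1))⁻¹ = (4 * ((k:ℝ) + 1))⁻¹ := by
          rw [div_eq_mul_inv, div_eq_mul_inv] at h2
          exact mul_left_cancel₀ (ne_of_gt hε) h2
        rw [inv_inj] at h3
        have h4 : (j:ℝ) = k := by linarith
        exact_mod_cast h4
      have hSB : ∀ j, S j ∈ B := by
        intro j
        intro t
        simp only [hS, add_sub_cancel_left]
        rw [Complex.norm_real, Real.norm_eq_abs, _root_.abs_of_nonneg (by positivity)]
        have hj1 : (1:ℝ) ≤ (j:ℝ) + 1 := by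
          have : (0:ℝ) ≤ (j:ℝ) := Nat.cast_nonneg j
          linarith
        have h1 : ε / (4 * ((j:ℝ) + 1)) ≤ ε / 4 :=
          div_le_div_of_nonneg_left hε.le (by norm_num) (by linarith)
        linarith
      have hT : (Set.range S \ v '' (Set.Iic m)).Nonempty :=
        ((Set.infinite_range_of_injective hSinj).diff ((Set.finite_Iic m).image v)).nonempty
      obtain ⟨x, hxS, hximg⟩ := hT
      have hB'open : IsOpen (B \ v '' (Set.Iic m)) :=
        hBopen.sdiff (((Set.finite_Iic m).image v).isClosed)
      have hB'ne : (B \ v '' (Set.Iic m)).Nonempty := by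
        obtain ⟨j, rfl⟩ := hxS
        exact ⟨S j, hSB j, hximg⟩
      obtain ⟨y, hyv, hyB'⟩ := hu_dense.exists_mem_open hB'open hB'ne
      obtain ⟨n, rfl⟩ := hyv
      refine ⟨n, fun t => hyB'.1 t, ?_⟩
      by_contra hnm
      push_neg at hnm
      exact hyB'.2 ⟨n, Set.mem_Iic.mpr hnm, rfl⟩
    set c0 : ℂ := h ⟨0, Or.inr rfl⟩ with hc0
    set ε' : ℝ := min (ε / 2) (ε / (2 * (C + 1))) with hε'def
    have hε'pos : 0 < ε' := lt_min (by positivity) (by positivity)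
    have hε'le1 : ε' ≤ ε / 2 := min_le_left _ _
    have hε'le2 : ε' ≤ ε / (2 * (C + 1)) := min_le_right _ _
    obtain ⟨f', n, hnΛ, hf'u, h0est⟩ := h0univ Λ hΛinf u c0 ε' hε'pos
    have hφcℂ : Continuous fun x => ((φ x : ℝ) : ℂ) := Complex.continuous_ofReal.comp hφc
    set f : C(UnitCircle, ℂ) := ⟨fun x => ((φ x : ℝ) : ℂ) * u x + (1 - ((φ x : ℝ) : ℂ)) * f' x,
      (hφcℂ.mul u.continuous).add ((continuous_const.sub hφcℂ).mul f'.continuous)⟩ with hfdef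
    set wF : C(UnitCircle, ℂ) := ⟨fun x => (1 - ((φ x : ℝ) : ℂ)) * (f' x - u x),
      (continuous_const.sub hφcℂ).mul (f'.continuous.sub u.continuous)⟩ with hwF
    set w0 : C(UnitCircle, ℂ) := ⟨fun x => ((φ x : ℝ) : ℂ) * (u x - f' x),
      hφcℂ.mul (u.continuous.sub f'.continuous)⟩ with hw0
    have hfu : f = u + wF := by
      ext x
      simp only [hfdef, hwF, ContinuousMap.coe_mk, ContinuousMap.add_apply]
      ring
    have hff' : f = f' + w0 := by
      ext x
      simp only [hfdef, hw0, ContinuousMap.coe_mk, ContinuousMap.add_apply]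
      ring
    have hf'u_le : ‖f' - u‖ ≤ ε' := hf'u.le
    have key_norm : ∀ (ψ : C(UnitCircle, ℂ)), (∀ x, ‖ψ x‖ ≤ ‖f' - u‖) → ‖ψ‖ ≤ ε' := by
      intro ψ hψ
      rw [ContinuousMap.norm_le _ hε'pos.le]
      exact fun x => (hψ x).trans hf'u_le
    have hwFnorm : ‖wF‖ ≤ ε' := by
      apply key_norm
      intro x
      simp only [hwF, ContinuousMap.coe_mk]
      rw [norm_mul]
      have h1 : ‖1 - ((φ x : ℝ) : ℂ)‖ ≤ 1 := by
        rw [show (1 : ℂ) - ((φ x : ℝ) : ℂ) = (((1 - φ x : ℝ)) : ℂ) by push_cast; ring,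
          Complex.norm_real, Real.norm_eq_abs, _root_.abs_of_nonneg (by linarith [hφle1 x])]
        linarith [hφ0le x]
      have h2 : ‖f' x - u x‖ ≤ ‖f' - u‖ := by
        simpa using (f' - u).norm_coe_le_norm x
      calc ‖1 - ((φ x : ℝ) : ℂ)‖ * ‖f' x - u x‖ ≤ 1 * ‖f' - u‖ :=
            mul_le_mul h1 h2 (norm_nonneg _) zero_le_one
        _ = ‖f' - u‖ := one_mul _
    have hw0norm : ‖w0‖ ≤ ε' := by
      apply key_norm
      intro x
      simp only [hw0, ContinuousMap.coe_mk]
      rw [norm_mul]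
      have h1 : ‖((φ x : ℝ) : ℂ)‖ ≤ 1 := by
        rw [Complex.norm_real, Real.norm_eq_abs, _root_.abs_of_nonneg (hφ0le x)]
        exact hφle1 x
      have h2 : ‖u x - f' x‖ ≤ ‖f' - u‖ := by
        rw [← norm_neg]
        simpa [neg_sub] using (f' - u).norm_coe_le_norm x
      calc ‖((φ x : ℝ) : ℂ)‖ * ‖u x - f' x‖ ≤ 1 * ‖f' - u‖ :=
            mul_le_mul h1 h2 (norm_nonneg _) zero_le_one
        _ = ‖f' - u‖ := one_mul _
    have hwFloc : ∀ t ∈ F, ∀ x, dist x t < d / 3 → wF x = 0 := by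
      intro t ht x hx
      have h1 : φ x = 1 := hφF x ((Metric.infDist_le_dist_of_mem ht).trans_lt hx)
      simp [hwF, h1]
    have hw0loc : ∀ x, dist x 0 < d / 3 → w0 x = 0 := by
      intro x hx
      simp [hw0, hφ0 x hx]
    have hCε' : C * ε' ≤ ε / 2 := by
      have h1 : C * ε' ≤ C * (ε / (2 * (C + 1))) := by
        apply mul_le_mul_of_nonneg_left hε'le2 hC0
      have h2 : C * (ε / (2 * (C + 1))) ≤ ε / 2 := by
        rw [show C * (ε / (2 * (C + 1))) = (C * ε) / (2 * (C + 1)) by ring,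
          div_le_div_iff₀ (by positivity) (by norm_num)]
        nlinarith
      linarith
    have hfg : ‖f - g‖ < ε := by
      rw [ContinuousMap.norm_lt_iff _ hε]
      intro x
      have e1 : (f - g) x = ((φ x : ℝ) : ℂ) * (u x - g x) + (1 - ((φ x : ℝ) : ℂ)) * (f' x - g x) := by
        simp only [hfdef, ContinuousMap.sub_apply, ContinuousMap.coe_mk]
        ring
      rw [e1]
      have b1 : ‖u x - g x‖ ≤ ‖u - g‖ := by simpa using (u - g).norm_coe_le_norm x
      have b2 : ‖f' x - g x‖ ≤ ‖f' - g‖ := by simpa using (f' - g).norm_coe_le_norm x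
      have b3 : ‖f' - g‖ < ε := by
        have e2 : f' - g = (f' - u) + (u - g) := by abel
        calc ‖f' - g‖ ≤ ‖f' - u‖ + ‖u - g‖ := by rw [e2]; exact norm_add_le _ _
          _ < ε' + ε / 2 := by linarith
          _ ≤ ε := by linarith
      have b4 : ‖u - g‖ < ε := by linarith
      have n1 : ‖((φ x : ℝ) : ℂ)‖ = φ x := by
        rw [Complex.norm_real, Real.norm_eq_abs, _root_.abs_of_nonneg (hφ0le x)]
      have n2 : ‖1 - ((φ x : ℝ) : ℂ)‖ = 1 - φ x := by
        rw [show (1 : ℂ) - ((φ x : ℝ) : ℂ) = (((1 - φ x : ℝ)) : ℂ) by push_cast; ring,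
          Complex.norm_real, Real.norm_eq_abs, _root_.abs_of_nonneg (by linarith [hφle1 x])]
      calc ‖((φ x : ℝ) : ℂ) * (u x - g x) + (1 - ((φ x : ℝ) : ℂ)) * (f' x - g x)‖
          ≤ ‖((φ x : ℝ) : ℂ) * (u x - g x)‖ + ‖(1 - ((φ x : ℝ) : ℂ)) * (f' x - g x)‖ :=
            norm_add_le _ _
        _ = φ x * ‖u x - g x‖ + (1 - φ x) * ‖f' x - g x‖ := by
            rw [norm_mul, norm_mul, n1, n2]
        _ < ε := by nlinarith [hφ0le x, hφle1 x, norm_nonneg (u x - g x), norm_nonneg (f' x - g x)]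
    refine ⟨f, n, hfg, ?_⟩
    rintro ⟨t, htF | ht0⟩
    · -- t ∈ F
      have key : partialSum n ⇑f t = partialSum n ⇑u t + partialSum n ⇑wF t := by
        rw [hfu]
        exact partialSum_add n u wF t
      have hloc : ‖partialSum n ⇑wF t‖ ≤ C * ‖wF‖ := hCloc wF t n (hwFloc t htF)
      have hΛest : ‖partialSum n ⇑u t - hb ⟨t, htF⟩‖ < ε / 2 := hnΛ ⟨t, htF⟩
      have e1 : partialSum n ⇑f t - h ⟨t, Or.inl htF⟩
          = (partialSum n ⇑u t - hb ⟨t, htF⟩) + partialSum n ⇑wF t := by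
        rw [key, hhb]
        ring
      rw [show (h ⟨t, Or.inl htF⟩) = hb ⟨t, htF⟩ from rfl] at e1 ⊢
      calc ‖partialSum n ⇑f t - hb ⟨t, htF⟩‖
          ≤ ‖partialSum n ⇑u t - hb ⟨t, htF⟩‖ + ‖partialSum n ⇑wF t‖ := by
            rw [e1]; exact norm_add_le _ _
        _ < ε / 2 + C * ‖wF‖ := by linarith [hloc]
        _ ≤ ε / 2 + C * ε' := by nlinarith [mul_le_mul_of_nonneg_left hwFnorm hC0]
        _ ≤ ε := by linarith
    · -- t = 0
      have ht : t = 0 := ht0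
      subst ht
      have key : partialSum n ⇑f 0 = partialSum n ⇑f' 0 + partialSum n ⇑w0 0 := by
        rw [hff']
        exact partialSum_add n f' w0 0
      have hloc : ‖partialSum n ⇑w0 0‖ ≤ C * ‖w0‖ := hCloc w0 0 n hw0loc
      have e1 : partialSum n ⇑f 0 - h ⟨0, Or.inr ht0⟩
          = (partialSum n ⇑f' 0 - c0) + partialSum n ⇑w0 0 := by
        rw [key, show (h ⟨0, Or.inr ht0⟩) = c0 from rfl]
        ring
      calc ‖partialSum n ⇑f 0 - h ⟨0, Or.inr ht0⟩‖
          ≤ ‖partialSum n ⇑f' 0 - c0‖ + ‖partialSum n ⇑w0 0‖ := by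
            rw [e1]; exact norm_add_le _ _
        _ < ε' + C * ‖w0‖ := by linarith [hloc]
        _ ≤ ε' + C * ε' := by nlinarith [mul_le_mul_of_nonneg_left hw0norm hC0]
        _ ≤ ε := by linarith
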